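/- Consider an IDV social choice setting in which every valuation v_i is differentiable in its own signal s_i, and let f : S → Δ(𝒜) be a randomized social choice function that is differentiable in each coordinate s_i. Then f satisfies cycle monotonicity (C-Mon) if and only if the profile v satisfies weak f-single-crossing. -/
import Mathlib


open Finset

noncomputable section

/-- The signal profile lies in the signal space `[0,1]^n`. -/
def InSig {n : ℕ} (s : Fin n → ℝ) : Prop := ∀ i, s i ∈ Set.Icc (0 : ℝ) 1

/-- Expected value `⟨u, d⟩ = ∑ a, d a · u a` of the vector `u` under the distribution `d`. -/
def expVal {A : Type*} [Fintype A] (u d : A → ℝ) : ℝ := ∑ a, d a * u a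

variable {n : ℕ} {A : Type*} [Fintype A]

/-- Valuations are nonnegative and nondecreasing in every signal coordinate. -/
def ValidVals (v : Fin n → A → (Fin n → ℝ) → ℝ) : Prop :=
  (∀ i a (s : Fin n → ℝ), InSig s → 0 ≤ v i a s) ∧
  (∀ i a (j : Fin n) (s : Fin n → ℝ), InSig s → ∀ t t' : ℝ, t ∈ Set.Icc (0 : ℝ) 1 →
    t' ∈ Set.Icc (0 : ℝ) 1 → t ≤ t' →
    v i a (Function.update s j t) ≤ v i a (Function.update s j t'))

/-- `f` maps every signal profile to a probability distribution over the alternatives. -/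
def IsDistr (f : (Fin n → ℝ) → A → ℝ) : Prop :=
  ∀ s : Fin n → ℝ, InSig s → (∀ a, 0 ≤ f s a) ∧ ∑ a, f s a = 1

/-- `dv i a s` is the derivative of `v i a` with respect to agent `i`'s own signal at `s`. -/
def IsOwnDeriv (v dv : Fin n → A → (Fin n → ℝ) → ℝ) : Prop :=
  ∀ i a (s : Fin n → ℝ), InSig s →
    HasDerivWithinAt (fun t => v i a (Function.update s i t)) (dv i a s)
      (Set.Icc (0 : ℝ) 1) (s i)

/-- `df i s a` is the derivative of `s ↦ f s a` with respect to agent `i`'s signal at `s`. -/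
def IsOwnDerivF (f : (Fin n → ℝ) → A → ℝ) (df : Fin n → (Fin n → ℝ) → A → ℝ) : Prop :=
  ∀ i (s : Fin n → ℝ) a, InSig s →
    HasDerivWithinAt (fun t => f (Function.update s i t) a) (df i s a)
      (Set.Icc (0 : ℝ) 1) (s i)

/-- The profile `v` satisfies weak `f`-single-crossing: for all `i`, `s` and `z ∈ Sᵢ`,
`⟨vᵢ(z, s₋ᵢ) − vᵢ(s), f(z, s₋ᵢ)⟩ ≥ ∫_{sᵢ}^{z} ⟨∂vᵢ/∂sᵢ(t, s₋ᵢ), f(t, s₋ᵢ)⟩ dt`. -/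
def WeakFSC (v dv : Fin n → A → (Fin n → ℝ) → ℝ) (f : (Fin n → ℝ) → A → ℝ) : Prop :=
  ∀ i (s : Fin n → ℝ), InSig s → ∀ z ∈ Set.Icc (0 : ℝ) 1,
    expVal (fun a => v i a (Function.update s i z) - v i a s) (f (Function.update s i z)) ≥
      ∫ t in (s i)..z,
        expVal (fun a => dv i a (Function.update s i t)) (f (Function.update s i t))

/-- `f` satisfies cycle monotonicity (C-Mon): for every agent `i`, every `s₋ᵢ`, every
`ℓ ≥ 2`, and all signals `σ 0, …, σ ℓ` in `Sᵢ` with `σ ℓ = σ 0`,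
`∑_{k<ℓ} ⟨vᵢ(σ k, s₋ᵢ), f(σ k, s₋ᵢ) − f(σ (k+1), s₋ᵢ)⟩ ≥ 0`. -/
def CMon (v : Fin n → A → (Fin n → ℝ) → ℝ) (f : (Fin n → ℝ) → A → ℝ) : Prop :=
  ∀ i (s : Fin n → ℝ), InSig s → ∀ ℓ : ℕ, 2 ≤ ℓ → ∀ σ : ℕ → ℝ,
    (∀ k ≤ ℓ, σ k ∈ Set.Icc (0 : ℝ) 1) → σ ℓ = σ 0 →
    ∑ k ∈ Finset.range ℓ,
      expVal (fun a => v i a (Function.update s i (σ k)))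
        (fun a => f (Function.update s i (σ k)) a - f (Function.update s i (σ (k + 1))) a)
      ≥ 0


section AuxCMonFSC

open Set MeasureTheory intervalIntegral Filter Topology

private lemma aux_deriv_nonneg' {V : ℝ → ℝ} {d t : ℝ}
    (hm : MonotoneOn V (Set.Icc 0 1)) (ht : t ∈ Set.Icc (0:ℝ) 1)
    (hd : HasDerivWithinAt V d (Set.Icc 0 1) t) : 0 ≤ d := by
  rcases lt_or_eq_of_le ht.2 with h1 | h1
  · have hd' : HasDerivWithinAt V d (Set.Ioo t 1) t :=
      hd.mono (fun r hr => ⟨ht.1.trans hr.1.le, hr.2.le⟩)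
    have hslope := hasDerivWithinAt_iff_tendsto_slope.mp hd'
    have hset : Set.Ioo t 1 \ {t} = Set.Ioo t 1 :=
      Set.diff_singleton_eq_self (fun h => (Set.mem_Ioo.mp h).1.ne rfl)
    rw [hset] at hslope
    have hne : (𝓝[Set.Ioo t 1] t).NeBot :=
      mem_closure_iff_nhdsWithin_neBot.mp (by
        rw [closure_Ioo h1.ne]; exact ⟨le_rfl, h1.le⟩)
    refine ge_of_tendsto hslope ?_
    filter_upwards [self_mem_nhdsWithin] with r hr'
    have : V t ≤ V r := hm ht ⟨ht.1.trans hr'.1.le, hr'.2.le⟩ hr'.1.le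
    have hrt : 0 < r - t := sub_pos.mpr hr'.1
    simp only [slope_def_field]
    rw [div_nonneg_iff]
    exact Or.inl ⟨sub_nonneg.mpr this, hrt.le⟩
  · subst h1
    have hd' : HasDerivWithinAt V d (Set.Ioo 0 1) 1 :=
      hd.mono (fun r hr => ⟨hr.1.le, hr.2.le⟩)
    have hslope := hasDerivWithinAt_iff_tendsto_slope.mp hd'
    have hset : Set.Ioo (0:ℝ) 1 \ {1} = Set.Ioo 0 1 :=
      Set.diff_singleton_eq_self (fun h => (Set.mem_Ioo.mp h).2.ne rfl)
    rw [hset] at hslope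
    have hne : (𝓝[Set.Ioo (0:ℝ) 1] 1).NeBot :=
      mem_closure_iff_nhdsWithin_neBot.mp (by
        rw [closure_Ioo one_ne_zero.symm]; exact ⟨zero_le_one, le_rfl⟩)
    refine ge_of_tendsto hslope ?_
    filter_upwards [self_mem_nhdsWithin] with r hr'
    have : V r ≤ V 1 := hm ⟨hr'.1.le, hr'.2.le⟩ ht hr'.2.le
    simp only [slope_def_field]
    rw [div_nonneg_iff]
    exact Or.inr ⟨sub_nonpos.mpr this, sub_nonpos.mpr hr'.2.le⟩

private lemma aux_ftc {V DV : ℝ → ℝ}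
    (hm : MonotoneOn V (Set.Icc 0 1))
    (hVd : ∀ t ∈ Set.Icc (0:ℝ) 1, HasDerivWithinAt V (DV t) (Set.Icc 0 1) t)
    {p q : ℝ} (hp : p ∈ Set.Icc (0:ℝ) 1) (hq : q ∈ Set.Icc (0:ℝ) 1) (hpq : p ≤ q) :
    IntervalIntegrable DV volume p q ∧ (∫ t in p..q, DV t) = V q - V p := by
  have hsub : Set.Icc p q ⊆ Set.Icc (0:ℝ) 1 := Set.Icc_subset_Icc hp.1 hq.2
  have hsubo : Set.Ioo p q ⊆ Set.Ioo (0:ℝ) 1 := fun r hr =>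
    ⟨lt_of_le_of_lt hp.1 hr.1, lt_of_lt_of_le hr.2 hq.2⟩
  have hcont0 : ContinuousOn V (Set.Icc (0:ℝ) 1) := fun t ht => (hVd t ht).continuousWithinAt
  have hcont : ContinuousOn V (Set.Icc p q) := hcont0.mono hsub
  have hda : ∀ r ∈ Set.Ioo p q, HasDerivAt V (DV r) r := fun r hr =>
    (hVd r (hsub ⟨hr.1.le, hr.2.le⟩)).hasDerivAt (Icc_mem_nhds (hsubo hr).1 (hsubo hr).2)
  have hpos : ∀ r ∈ Set.Ioo p q, 0 ≤ DV r := fun r hr =>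
    aux_deriv_nonneg' hm (hsub ⟨hr.1.le, hr.2.le⟩) (hVd r (hsub ⟨hr.1.le, hr.2.le⟩))
  have hint : IntervalIntegrable DV volume p q :=
    (intervalIntegrable_iff_integrableOn_Ioc_of_le hpq).mpr
      (intervalIntegral.integrableOn_deriv_of_nonneg hcont hda hpos)
  exact ⟨hint, intervalIntegral.integral_eq_sub_of_hasDerivAt_of_le hpq hcont hda hint⟩

private lemma aux_phi_int {V DV F : ℝ → ℝ}
    (hm : MonotoneOn V (Set.Icc 0 1))
    (hVd : ∀ t ∈ Set.Icc (0:ℝ) 1, HasDerivWithinAt V (DV t) (Set.Icc 0 1) t)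
    (hFc : ContinuousOn F (Set.Icc 0 1))
    (hF0 : ∀ t ∈ Set.Icc (0:ℝ) 1, 0 ≤ F t) (hF1 : ∀ t ∈ Set.Icc (0:ℝ) 1, F t ≤ 1)
    {p q : ℝ} (hp : p ∈ Set.Icc (0:ℝ) 1) (hq : q ∈ Set.Icc (0:ℝ) 1) (hpq : p ≤ q) :
    IntervalIntegrable (fun t => F t * DV t) volume p q := by
  rw [intervalIntegrable_iff_integrableOn_Ioc_of_le hpq]
  have hIoc : Set.Ioc p q ⊆ Set.Icc (0:ℝ) 1 := fun r hr => ⟨hp.1.trans hr.1.le, hr.2.trans hq.2⟩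
  have hae : ∀ᵐ r ∂(volume.restrict (Set.Ioc p q)), r ∈ Set.Ioo (0:ℝ) 1 := by
    rw [ae_iff, Measure.restrict_apply' measurableSet_Ioc]
    have hsub : {r | ¬r ∈ Set.Ioo (0:ℝ) 1} ∩ Set.Ioc p q ⊆ {(1:ℝ)} := fun r hr => ?_
    refine measure_mono_null hsub Real.volume_singleton
    rcases hr with ⟨hr1, hr2⟩
    have hr3 := hIoc hr2
    have : r = 1 := by
      by_contra hne
      exact hr1 ⟨lt_of_le_of_lt hp.1 hr2.1, lt_of_le_of_ne hr3.2 hne⟩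
    exact this
  have hmem : ∀ᵐ r ∂(volume.restrict (Set.Ioc p q)), r ∈ Set.Ioc p q :=
    ae_restrict_mem measurableSet_Ioc
  have hDVae : DV =ᵐ[volume.restrict (Set.Ioc p q)] deriv V := by
    filter_upwards [hae] with r hr
    exact (((hVd r ⟨hr.1.le, hr.2.le⟩).hasDerivAt (Icc_mem_nhds hr.1 hr.2)).deriv).symm
  have hDVm : AEStronglyMeasurable DV (volume.restrict (Set.Ioc p q)) :=
    ((measurable_deriv V).aestronglyMeasurable).congr hDVae.symm
  have hFm : AEStronglyMeasurable F (volume.restrict (Set.Ioc p q)) :=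
    (hFc.mono hIoc).aestronglyMeasurable measurableSet_Ioc
  have hDVint : IntegrableOn DV (Set.Ioc p q) volume :=
    (intervalIntegrable_iff_integrableOn_Ioc_of_le hpq).mp (aux_ftc hm hVd hp hq hpq).1
  refine hDVint.mono' (hFm.mul hDVm) ?_
  filter_upwards [hmem] with r hr
  have hr1 : r ∈ Set.Icc (0:ℝ) 1 := hIoc hr
  have h0 : 0 ≤ DV r := aux_deriv_nonneg' hm hr1 (hVd r hr1)
  have h2 : 0 ≤ F r := hF0 r hr1
  rw [Real.norm_eq_abs, abs_mul, abs_of_nonneg h2, abs_of_nonneg h0]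
  calc F r * DV r ≤ 1 * DV r := mul_le_mul_of_nonneg_right (hF1 r hr1) h0
    _ = DV r := one_mul _

private lemma aux_est {V DV F : ℝ → ℝ}
    (hm : MonotoneOn V (Set.Icc 0 1))
    (hVd : ∀ t ∈ Set.Icc (0:ℝ) 1, HasDerivWithinAt V (DV t) (Set.Icc 0 1) t)
    (hFc : ContinuousOn F (Set.Icc 0 1))
    (hF0 : ∀ t ∈ Set.Icc (0:ℝ) 1, 0 ≤ F t) (hF1 : ∀ t ∈ Set.Icc (0:ℝ) 1, F t ≤ 1)
    {t1 t2 c ε' : ℝ} (ht1 : t1 ∈ Set.Icc (0:ℝ) 1) (ht2 : t2 ∈ Set.Icc (0:ℝ) 1)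
    (h12 : t1 ≤ t2) (hc : c ∈ Set.Icc t1 t2) (hε : 0 ≤ ε')
    (hmod : ∀ r ∈ Set.Icc t1 t2, |F c - F r| ≤ ε') :
    |F c * (V t2 - V t1) - ∫ r in t1..t2, F r * DV r| ≤ ε' * (V t2 - V t1) := by
  obtain ⟨hDVint, hftc⟩ := aux_ftc hm hVd ht1 ht2 h12
  have hphi := aux_phi_int hm hVd hFc hF0 hF1 ht1 ht2 h12
  have hIcc : Set.Icc t1 t2 ⊆ Set.Icc (0:ℝ) 1 := Set.Icc_subset_Icc ht1.1 ht2.2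
  have h1 : F c * (V t2 - V t1) = ∫ r in t1..t2, F c * DV r := by
    rw [intervalIntegral.integral_const_mul, hftc]
  rw [h1, ← intervalIntegral.integral_sub (hDVint.const_mul _) hphi]
  have h2 : (∫ r in t1..t2, ε' * DV r) = ε' * (V t2 - V t1) := by
    rw [intervalIntegral.integral_const_mul, hftc]
  rw [← h2]
  refine le_trans (intervalIntegral.abs_integral_le_integral_abs h12) ?_
  refine intervalIntegral.integral_mono_on h12 ((hDVint.const_mul _).sub hphi).abs
    (hDVint.const_mul _) (fun r hr => ?_)
  have hr1 : r ∈ Set.Icc (0:ℝ) 1 := hIcc hr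
  have h0 : 0 ≤ DV r := aux_deriv_nonneg' hm hr1 (hVd r hr1)
  have : F c * DV r - F r * DV r = (F c - F r) * DV r := by ring
  rw [this, abs_mul, abs_of_nonneg h0]
  exact mul_le_mul_of_nonneg_right (hmod r hr) h0

section Sum

variable {A : Type*} [Fintype A] {V DV F : A → ℝ → ℝ}

variable (hm : ∀ a, MonotoneOn (V a) (Set.Icc 0 1))
  (hVd : ∀ a, ∀ t ∈ Set.Icc (0:ℝ) 1, HasDerivWithinAt (V a) (DV a t) (Set.Icc 0 1) t)
  (hFc : ∀ a, ContinuousOn (F a) (Set.Icc 0 1))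
  (hF0 : ∀ a, ∀ t ∈ Set.Icc (0:ℝ) 1, 0 ≤ F a t)
  (hF1 : ∀ a, ∀ t ∈ Set.Icc (0:ℝ) 1, F a t ≤ 1)

include hm hVd hFc hF0 hF1

private lemma aux_g_int {p q : ℝ} (hp : p ∈ Set.Icc (0:ℝ) 1) (hq : q ∈ Set.Icc (0:ℝ) 1) :
    IntervalIntegrable (fun r => ∑ a, F a r * DV a r) volume p q := by
  have hfun : (fun r => ∑ a, F a r * DV a r) = (∑ a : A, fun t => F a t * DV a t) := by
    ext r; simp
  rw [hfun]
  rcases le_total p q with h | h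
  · exact IntervalIntegrable.sum (Finset.univ) (μ := volume) (a := p) (b := q)
      (f := fun a t => F a t * DV a t)
      (fun a _ => aux_phi_int (hm a) (hVd a) (hFc a) (hF0 a) (hF1 a) hp hq h)
  · exact (IntervalIntegrable.sum (Finset.univ) (μ := volume) (a := q) (b := p)
      (f := fun a t => F a t * DV a t)
      (fun a _ => aux_phi_int (hm a) (hVd a) (hFc a) (hF0 a) (hF1 a) hq hp h)).symm

private lemma aux_step {t1 t2 ε' : ℝ} (ht1 : t1 ∈ Set.Icc (0:ℝ) 1) (ht2 : t2 ∈ Set.Icc (0:ℝ) 1)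
    (hε : 0 ≤ ε')
    (hmod : ∀ a, ∀ r ∈ Set.uIcc t1 t2, |F a t2 - F a r| ≤ ε') :
    ∑ a, F a t2 * (V a t2 - V a t1) ≤
      (∫ r in t1..t2, ∑ a, F a r * DV a r) + ε' * ∑ a, |V a t2 - V a t1| := by
  rcases le_total t1 t2 with h | h
  · rw [Set.uIcc_of_le h] at hmod
    have key : ∀ a, F a t2 * (V a t2 - V a t1) ≤
        (∫ r in t1..t2, F a r * DV a r) + ε' * |V a t2 - V a t1| := by
      intro a
      have hΔ : 0 ≤ V a t2 - V a t1 := sub_nonneg.mpr (hm a ht1 ht2 h)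
      have hest := aux_est (hm a) (hVd a) (hFc a) (hF0 a) (hF1 a) ht1 ht2 h
        (Set.mem_Icc.mpr ⟨h, le_rfl⟩) hε (hmod a)
      have h2 := (abs_le.mp hest).2
      rw [abs_of_nonneg hΔ]
      linarith
    calc ∑ a, F a t2 * (V a t2 - V a t1)
        ≤ ∑ a, ((∫ r in t1..t2, F a r * DV a r) + ε' * |V a t2 - V a t1|) :=
          Finset.sum_le_sum (fun a _ => key a)
      _ = (∫ r in t1..t2, ∑ a, F a r * DV a r) + ε' * ∑ a, |V a t2 - V a t1| := by
          rw [Finset.sum_add_distrib, intervalIntegral.integral_finset_sum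
            (fun a _ => aux_phi_int (hm a) (hVd a) (hFc a) (hF0 a) (hF1 a) ht1 ht2 h),
            Finset.mul_sum]
  · rw [Set.uIcc_of_ge h] at hmod
    have key : ∀ a, F a t2 * (V a t2 - V a t1) ≤
        (∫ r in t1..t2, F a r * DV a r) + ε' * |V a t2 - V a t1| := by
      intro a
      have hΔ : 0 ≤ V a t1 - V a t2 := sub_nonneg.mpr (hm a ht2 ht1 h)
      have hest := aux_est (hm a) (hVd a) (hFc a) (hF0 a) (hF1 a) ht2 ht1 h
        (Set.mem_Icc.mpr ⟨le_rfl, h⟩) hε (hmod a)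
      have h2 := (abs_le.mp hest).1
      rw [intervalIntegral.integral_symm, abs_of_nonpos (by linarith : V a t2 - V a t1 ≤ 0)]
      linarith
    calc ∑ a, F a t2 * (V a t2 - V a t1)
        ≤ ∑ a, ((∫ r in t1..t2, F a r * DV a r) + ε' * |V a t2 - V a t1|) :=
          Finset.sum_le_sum (fun a _ => key a)
      _ = (∫ r in t1..t2, ∑ a, F a r * DV a r) + ε' * ∑ a, |V a t2 - V a t1| := by
          rw [Finset.sum_add_distrib, intervalIntegral.integral_finset_sum
            (fun a _ => ((aux_phi_int (hm a) (hVd a) (hFc a) (hF0 a) (hF1 a) ht2 ht1 h).symm)),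
            Finset.mul_sum]

private lemma aux_sum_est {m : ℕ} {σ : ℕ → ℝ} {ε' : ℝ} (hε : 0 ≤ ε')
    (hσ : ∀ k ≤ m, σ k ∈ Set.Icc (0:ℝ) 1)
    (hmod : ∀ k < m, ∀ a, ∀ r ∈ Set.uIcc (σ k) (σ (k+1)), |F a (σ (k+1)) - F a r| ≤ ε') :
    ∑ k ∈ Finset.range m, ∑ a, F a (σ (k+1)) * (V a (σ (k+1)) - V a (σ k)) ≤
      (∫ r in (σ 0)..(σ m), ∑ a, F a r * DV a r) +
        ε' * ∑ k ∈ Finset.range m, ∑ a, |V a (σ (k+1)) - V a (σ k)| := by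
  have hadj : ∑ k ∈ Finset.range m, (∫ r in (σ k)..(σ (k+1)), ∑ a, F a r * DV a r)
      = ∫ r in (σ 0)..(σ m), ∑ a, F a r * DV a r :=
    intervalIntegral.sum_integral_adjacent_intervals (fun k hk =>
      aux_g_int hm hVd hFc hF0 hF1 (hσ k (le_of_lt hk)) (hσ (k+1) hk))
  rw [← hadj, Finset.mul_sum, ← Finset.sum_add_distrib]
  refine Finset.sum_le_sum (fun k hk => ?_)
  have hk' := Finset.mem_range.mp hk
  exact aux_step hm hVd hFc hF0 hF1 (hσ k hk'.le) (hσ (k+1) hk') hε (hmod k hk')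

end Sum

private lemma aux_telescope {A : Type*} [Fintype A] (V F : A → ℝ → ℝ) (σ : ℕ → ℝ) (N : ℕ)
    (hcyc : σ N = σ 0) :
    (∑ k ∈ Finset.range N, ∑ a, (F a (σ k) - F a (σ (k+1))) * V a (σ k)) =
    ∑ k ∈ Finset.range N, ∑ a, F a (σ (k+1)) * (V a (σ (k+1)) - V a (σ k)) := by
  have h : ∀ k, (∑ a, (F a (σ k) - F a (σ (k+1))) * V a (σ k)) -
      (∑ a, F a (σ (k+1)) * (V a (σ (k+1)) - V a (σ k)))
      = (∑ a, F a (σ k) * V a (σ k)) - (∑ a, F a (σ (k+1)) * V a (σ (k+1))) := by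
    intro k
    rw [← Finset.sum_sub_distrib, ← Finset.sum_sub_distrib]
    exact Finset.sum_congr rfl (fun a _ => by ring)
  have h2 : ∑ k ∈ Finset.range N,
      ((∑ a, (F a (σ k) - F a (σ (k+1))) * V a (σ k)) -
        (∑ a, F a (σ (k+1)) * (V a (σ (k+1)) - V a (σ k)))) = 0 := by
    rw [Finset.sum_congr rfl (fun k _ => h k),
      Finset.sum_range_sub' (fun k => ∑ a, F a (σ k) * V a (σ k)) N, hcyc, sub_self]
  rw [Finset.sum_sub_distrib] at h2
  linarith

end AuxCMonFSC

private lemma aux_insig {n : ℕ} {s : Fin n → ℝ} (hs : InSig s) (i : Fin n) {t : ℝ}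
    (ht : t ∈ Set.Icc (0:ℝ) 1) : InSig (Function.update s i t) := by
  intro j
  rcases eq_or_ne j i with h | h
  · subst h; simpa using ht
  · rw [Function.update_of_ne h]; exact hs j

private lemma aux_setting {n : ℕ} {A : Type*} [Fintype A]
    {v dv : Fin n → A → (Fin n → ℝ) → ℝ} {f : (Fin n → ℝ) → A → ℝ}
    {df : Fin n → (Fin n → ℝ) → A → ℝ}
    (hv : ValidVals v) (hdv : IsOwnDeriv v dv) (hf : IsDistr f) (hdf : IsOwnDerivF f df)
    (i : Fin n) {s : Fin n → ℝ} (hs : InSig s) :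
    (∀ a, MonotoneOn (fun t => v i a (Function.update s i t)) (Set.Icc 0 1)) ∧
    (∀ a, ∀ t ∈ Set.Icc (0:ℝ) 1, HasDerivWithinAt (fun r => v i a (Function.update s i r))
        (dv i a (Function.update s i t)) (Set.Icc 0 1) t) ∧
    (∀ a, ContinuousOn (fun t => f (Function.update s i t) a) (Set.Icc 0 1)) ∧
    (∀ a, ∀ t ∈ Set.Icc (0:ℝ) 1, 0 ≤ f (Function.update s i t) a) ∧
    (∀ a, ∀ t ∈ Set.Icc (0:ℝ) 1, f (Function.update s i t) a ≤ 1) := by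
  refine ⟨fun a t ht t' ht' htt' => hv.2 i a i s hs t t' ht ht' htt', ?_, ?_, ?_, ?_⟩
  · intro a t ht
    have h := hdv i a (Function.update s i t) (aux_insig hs i ht)
    simp only [Function.update_idem, Function.update_self] at h
    exact h
  · intro a t ht
    have h := hdf i (Function.update s i t) a (aux_insig hs i ht)
    simp only [Function.update_idem, Function.update_self] at h
    exact h.continuousWithinAt
  · exact fun a t ht => (hf _ (aux_insig hs i ht)).1 a
  · intro a t ht
    have h := hf _ (aux_insig hs i ht)
    calc f (Function.update s i t) a ≤ ∑ b, f (Function.update s i t) b :=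
          Finset.single_le_sum (fun b _ => h.1 b) (Finset.mem_univ a)
      _ = 1 := h.2


/-- `f` satisfies cycle monotonicity (C-Mon) iff the profile `v`
satisfies weak `f`-single-crossing. -/

theorem cmon_iff_weak_fsc
    (v dv : Fin n → A → (Fin n → ℝ) → ℝ)
    (f : (Fin n → ℝ) → A → ℝ) (df : Fin n → (Fin n → ℝ) → A → ℝ)
    (hv : ValidVals v) (hdv : IsOwnDeriv v dv)
    (hf : IsDistr f) (hdf : IsOwnDerivF f df) :
    CMon v f ↔ WeakFSC v dv f := by

  constructor
  · -- C-Mon implies weak f-single-crossing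
    intro hcm i s hs z hz
    obtain ⟨hm, hVd, hFc, hF0, hF1⟩ := aux_setting hv hdv hf hdf i hs
    have hx : s i ∈ Set.Icc (0:ℝ) 1 := hs i
    have hvs : ∀ a : A, v i a s = v i a (Function.update s i (s i)) := fun a => by
      rw [Function.update_eq_self]
    simp only [expVal, hvs]
    rw [ge_iff_le]
    refine le_of_forall_pos_le_add (fun ε hε => ?_)
    set K := ∑ a, (v i a (Function.update s i 1) - v i a (Function.update s i 0)) with hKdef
    have hK0 : (0:ℝ) ≤ K := by
      rw [hKdef]
      exact Finset.sum_nonneg (fun a _ => sub_nonneg.mpr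
        (hm a (Set.mem_Icc.mpr ⟨le_rfl, zero_le_one⟩)
          (Set.mem_Icc.mpr ⟨zero_le_one, le_rfl⟩) zero_le_one))
    set ε' := ε / (K + 1) with hε'def
    have hε' : 0 < ε' := by rw [hε'def]; exact div_pos hε (by linarith)
    have hΦc : ContinuousOn (fun t => (fun a => f (Function.update s i t) a))
        (Set.Icc (0:ℝ) 1) := continuousOn_pi.mpr (fun a => hFc a)
    have hUC := IsCompact.uniformContinuousOn_of_continuous isCompact_Icc hΦc
    obtain ⟨δ, hδ, hδprop⟩ := Metric.uniformContinuousOn_iff_le.mp hUC ε' hε'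
    obtain ⟨m0, hm0⟩ := exists_nat_gt (|s i - z| / δ)
    set m : ℕ := m0 + 1 with hmdef
    have hm1 : 1 ≤ m := by rw [hmdef]; omega
    have hmpos : (0:ℝ) < m := by
      have : 0 < m := by omega
      exact_mod_cast this
    have hmne : (m:ℝ) ≠ 0 := ne_of_gt hmpos
    set d : ℝ := (s i - z) / m with hddef
    have hmd : (m:ℝ) * d = s i - z := by rw [hddef]; field_simp
    set σf : ℕ → ℝ := fun k => if k ≤ m then z + k * d else z with hσdef
    have hσ0 : σf 0 = z := by simp [hσdef]
    have hσm : σf m = s i := by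
      simp only [hσdef, if_pos (le_refl m)]
      linarith
    have hσm1 : σf (m+1) = z := by simp [hσdef]
    have hσmem : ∀ k ≤ m + 1, σf k ∈ Set.Icc (0:ℝ) 1 := by
      intro k hk
      by_cases hkm : k ≤ m
      · have hkc : (k:ℝ) ≤ m := Nat.cast_le.mpr hkm
        have hkc0 : (0:ℝ) ≤ k := Nat.cast_nonneg k
        simp only [hσdef, if_pos hkm]
        rcases le_total z (s i) with h | h
        · have hd0 : 0 ≤ d := by rw [hddef]; exact div_nonneg (by linarith) hmpos.le
          constructor
          · have := mul_nonneg hkc0 hd0; linarith [hz.1]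
          · have := mul_le_mul_of_nonneg_right hkc hd0
            linarith [hx.2]
        · have hd0 : d ≤ 0 := by
            rw [hddef]; exact div_nonpos_of_nonpos_of_nonneg (by linarith) hmpos.le
          constructor
          · have := mul_le_mul_of_nonpos_right hkc hd0
            linarith [hx.1]
          · have := mul_nonpos_of_nonneg_of_nonpos hkc0 hd0
            linarith [hz.2]
      · simp only [hσdef, if_neg hkm]; exact hz
    have hstep : ∀ k < m, σf (k+1) - σf k = d := by
      intro k hk
      simp only [hσdef, if_pos (by omega : k + 1 ≤ m), if_pos (by omega : k ≤ m)]
      push_cast; ring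
    have hdδ : |d| ≤ δ := by
      rw [hddef, abs_div, abs_of_pos hmpos, div_le_iff₀ hmpos]
      rw [div_lt_iff₀ hδ] at hm0
      have hc : (m0:ℝ) ≤ m := by exact_mod_cast (by omega : m0 ≤ m)
      nlinarith [hδ.le, abs_nonneg (s i - z)]
    have hmod : ∀ k < m, ∀ a, ∀ r ∈ Set.uIcc (σf k) (σf (k+1)),
        |f (Function.update s i (σf (k+1))) a - f (Function.update s i r) a| ≤ ε' := by
      intro k hk a r hr
      have hk1 : σf k ∈ Set.Icc (0:ℝ) 1 := hσmem k (by omega)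
      have hk2 : σf (k+1) ∈ Set.Icc (0:ℝ) 1 := hσmem (k+1) (by omega)
      have hrI : r ∈ Set.Icc (0:ℝ) 1 := Set.uIcc_subset_Icc hk1 hk2 hr
      have hdist : dist (σf (k+1)) r ≤ δ := by
        rw [Real.dist_eq]
        have hd' : |σf (k+1) - σf k| ≤ δ := by rw [hstep k hk]; exact hdδ
        have h1 := abs_le.mp hd'
        rcases le_total (σf k) (σf (k+1)) with h | h
        · rw [Set.uIcc_of_le h] at hr
          exact abs_le.mpr ⟨by linarith [hr.2], by linarith [hr.1]⟩
        · rw [Set.uIcc_of_ge h] at hr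
          exact abs_le.mpr ⟨by linarith [hr.2], by linarith [hr.1]⟩
      have hΦ := hδprop (σf (k+1)) hk2 r hrI hdist
      calc |f (Function.update s i (σf (k+1))) a - f (Function.update s i r) a|
          = dist (f (Function.update s i (σf (k+1))) a) (f (Function.update s i r) a) :=
            (Real.dist_eq _ _).symm
        _ ≤ dist (fun b => f (Function.update s i (σf (k+1))) b)
              (fun b => f (Function.update s i r) b) := dist_le_pi_dist _ _ a
        _ ≤ ε' := hΦ
    have hcyc : σf (m+1) = σf 0 := by rw [hσm1, hσ0]
    have hcmon := hcm i s hs (m+1) (by omega) σf hσmem hcyc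
    simp only [expVal] at hcmon
    have htel : (∑ k ∈ Finset.range (m+1), ∑ a,
          (f (Function.update s i (σf k)) a - f (Function.update s i (σf (k+1))) a) *
            v i a (Function.update s i (σf k))) =
        ∑ k ∈ Finset.range (m+1), ∑ a, f (Function.update s i (σf (k+1))) a *
          (v i a (Function.update s i (σf (k+1))) - v i a (Function.update s i (σf k))) :=
      aux_telescope (fun a t => v i a (Function.update s i t))
        (fun a t => f (Function.update s i t) a) σf (m+1) hcyc
    have hTsum : (0:ℝ) ≤ ∑ k ∈ Finset.range (m+1), ∑ a,
        f (Function.update s i (σf (k+1))) a *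
        (v i a (Function.update s i (σf (k+1))) - v i a (Function.update s i (σf k))) := by
      rw [← htel]; exact hcmon
    rw [Finset.sum_range_succ] at hTsum
    rw [hσm1, hσm] at hTsum
    have hest : ∑ k ∈ Finset.range m, ∑ a, f (Function.update s i (σf (k+1))) a *
        (v i a (Function.update s i (σf (k+1))) - v i a (Function.update s i (σf k))) ≤
        (∫ r in (σf 0)..(σf m), ∑ a,
            f (Function.update s i r) a * dv i a (Function.update s i r)) +
          ε' * ∑ k ∈ Finset.range m, ∑ a,
            |v i a (Function.update s i (σf (k+1))) - v i a (Function.update s i (σf k))| :=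
      aux_sum_est hm hVd hFc hF0 hF1 hε'.le (fun k hk => hσmem k (Nat.le_succ_of_le hk)) hmod
    rw [hσ0, hσm, intervalIntegral.integral_symm (s i) z] at hest
    set S := ∑ k ∈ Finset.range m, ∑ a,
        |v i a (Function.update s i (σf (k+1))) - v i a (Function.update s i (σf k))| with hSdef
    have hS0 : (0:ℝ) ≤ S := by
      rw [hSdef]
      exact Finset.sum_nonneg (fun k _ => Finset.sum_nonneg (fun a _ => abs_nonneg _))
    have hS : S ≤ K := by
      rw [hSdef, hKdef, Finset.sum_comm]
      refine Finset.sum_le_sum (fun a _ => ?_)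
      have hmono := hm a
      have hVz1 : v i a (Function.update s i (s i)) ≤ v i a (Function.update s i 1) :=
        hmono hx (Set.mem_Icc.mpr ⟨zero_le_one, le_rfl⟩) hx.2
      have hV0z : v i a (Function.update s i 0) ≤ v i a (Function.update s i z) :=
        hmono (Set.mem_Icc.mpr ⟨le_rfl, zero_le_one⟩) hz hz.1
      have hVz1' : v i a (Function.update s i z) ≤ v i a (Function.update s i 1) :=
        hmono hz (Set.mem_Icc.mpr ⟨zero_le_one, le_rfl⟩) hz.2
      have hV0x : v i a (Function.update s i 0) ≤ v i a (Function.update s i (s i)) :=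
        hmono (Set.mem_Icc.mpr ⟨le_rfl, zero_le_one⟩) hx hx.1
      rcases le_total z (s i) with h | h
      · have hd0 : 0 ≤ d := by rw [hddef]; exact div_nonneg (by linarith) hmpos.le
        have habs : ∀ k ∈ Finset.range m,
            |v i a (Function.update s i (σf (k+1))) - v i a (Function.update s i (σf k))| =
            v i a (Function.update s i (σf (k+1))) - v i a (Function.update s i (σf k)) := by
          intro k hk
          have hk' := Finset.mem_range.mp hk
          refine abs_of_nonneg (sub_nonneg.mpr (hmono (hσmem k (by omega))
            (hσmem (k+1) (by omega)) ?_))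
          have := hstep k hk'
          linarith
        have hsum : ∑ k ∈ Finset.range m,
            (v i a (Function.update s i (σf (k+1))) - v i a (Function.update s i (σf k))) =
            v i a (Function.update s i (σf m)) - v i a (Function.update s i (σf 0)) :=
          Finset.sum_range_sub (fun k => v i a (Function.update s i (σf k))) m
        rw [Finset.sum_congr rfl habs, hsum, hσm, hσ0]
        linarith
      · have hd0 : d ≤ 0 := by
          rw [hddef]; exact div_nonpos_of_nonpos_of_nonneg (by linarith) hmpos.le
        have habs : ∀ k ∈ Finset.range m,
            |v i a (Function.update s i (σf (k+1))) - v i a (Function.update s i (σf k))| =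
            v i a (Function.update s i (σf k)) - v i a (Function.update s i (σf (k+1))) := by
          intro k hk
          have hk' := Finset.mem_range.mp hk
          have hle : v i a (Function.update s i (σf (k+1))) ≤
              v i a (Function.update s i (σf k)) := by
            refine hmono (hσmem (k+1) (by omega)) (hσmem k (by omega)) ?_
            have := hstep k hk'
            linarith
          rw [abs_of_nonpos (sub_nonpos.mpr hle)]
          ring
        have hsum : ∑ k ∈ Finset.range m,
            (v i a (Function.update s i (σf k)) - v i a (Function.update s i (σf (k+1)))) =
            v i a (Function.update s i (σf 0)) - v i a (Function.update s i (σf m)) :=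
          Finset.sum_range_sub' (fun k => v i a (Function.update s i (σf k))) m
        rw [Finset.sum_congr rfl habs, hsum, hσm, hσ0]
        linarith
    have hεK : ε' * K ≤ ε := by
      rw [hε'def, div_mul_eq_mul_div, div_le_iff₀ (by linarith : (0:ℝ) < K + 1)]
      nlinarith
    have hεS : ε' * S ≤ ε := le_trans (mul_le_mul_of_nonneg_left hS hε'.le) hεK
    linarith
  · -- weak f-single-crossing implies C-Mon
    intro hw i s hs ℓ hℓ σ hσmem hcyc
    obtain ⟨hm, hVd, hFc, hF0, hF1⟩ := aux_setting hv hdv hf hdf i hs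
    simp only [expVal]
    have hT : ∀ k < ℓ, (∫ t in (σ k)..(σ (k+1)), ∑ a,
        f (Function.update s i t) a * dv i a (Function.update s i t)) ≤
        ∑ a, f (Function.update s i (σ (k+1))) a *
          (v i a (Function.update s i (σ (k+1))) - v i a (Function.update s i (σ k))) := by
      intro k hk
      have h := hw i (Function.update s i (σ k)) (aux_insig hs i (hσmem k hk.le)) (σ (k+1))
        (hσmem (k+1) hk)
      simp only [expVal, Function.update_idem, Function.update_self] at h
      exact h
    have hadj : ∑ k ∈ Finset.range ℓ, (∫ t in (σ k)..(σ (k+1)), ∑ a,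
        f (Function.update s i t) a * dv i a (Function.update s i t)) =
        ∫ t in (σ 0)..(σ ℓ), ∑ a,
          f (Function.update s i t) a * dv i a (Function.update s i t) :=
      intervalIntegral.sum_integral_adjacent_intervals (fun k hk =>
        aux_g_int hm hVd hFc hF0 hF1 (hσmem k hk.le) (hσmem (k+1) hk))
    have hzero : (∫ t in (σ 0)..(σ ℓ), ∑ a,
        f (Function.update s i t) a * dv i a (Function.update s i t)) = 0 := by
      rw [hcyc, intervalIntegral.integral_same]
    have htel : (∑ k ∈ Finset.range ℓ, ∑ a,
          (f (Function.update s i (σ k)) a - f (Function.update s i (σ (k+1))) a) *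
            v i a (Function.update s i (σ k))) =
        ∑ k ∈ Finset.range ℓ, ∑ a, f (Function.update s i (σ (k+1))) a *
          (v i a (Function.update s i (σ (k+1))) - v i a (Function.update s i (σ k))) :=
      aux_telescope (fun a t => v i a (Function.update s i t))
        (fun a t => f (Function.update s i t) a) σ ℓ hcyc
    rw [ge_iff_le, htel]
    calc (0:ℝ) = ∑ k ∈ Finset.range ℓ, (∫ t in (σ k)..(σ (k+1)), ∑ a,
          f (Function.update s i t) a * dv i a (Function.update s i t)) := by
          rw [hadj, hzero]
      _ ≤ _ := Finset.sum_le_sum (fun k hk => hT k (Finset.mem_range.mp hk))
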